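/- Let α, β, μ be real numbers with 0 < α < β and μ > 0. Then every nonreal complex root λ of the cubic p_μ(λ) = αλ³ + λ² + βμλ + μ satisfies −(1/2)(1/α − 1/β) < Re(λ) < 0. -/

import Mathlib

theorem stmt_6 (α β μ : ℝ) (hα : 0 < α) (hαβ : α < β) (hμ : 0 < μ)
    (z : ℂ) (him : z.im ≠ 0)
    (hroot : (α : ℂ) * z ^ 3 + z ^ 2 + (β : ℂ) * (μ : ℂ) * z + (μ : ℂ) = 0) :
    -(1 / 2) * (1 / α - 1 / β) < z.re ∧ z.re < 0 := by
  set x := z.re with hx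
  set y := z.im with hy
  have h1 := congrArg Complex.re hroot
  have h2 := congrArg Complex.im hroot
  simp [pow_succ, Complex.mul_re, Complex.mul_im] at h1 h2
  -- imaginary part divided by y
  have E2 : 3*α*x^2 - α*y^2 + 2*x + β*μ = 0 := by
    have hyy : y * (3*α*x^2 - α*y^2 + 2*x + β*μ) = y * 0 := by
      rw [mul_zero]; linear_combination h2
    exact mul_left_cancel₀ him hyy
  -- eliminate y² : key cubic equation in x
  have key : 2*x*(2*α*x+1)^2 + μ*(2*α*β*x + β - α) = 0 := by
    linear_combination (3*α*x+1)*E2 - α*h1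
  have hx0 : x < 0 := by
    by_contra h; push_neg at h
    have ht : (0:ℝ) < 2*α*β*x + β - α := by
      nlinarith [mul_nonneg (mul_nonneg hα.le (by linarith : (0:ℝ) ≤ β)) h]
    nlinarith [key, mul_nonneg h (sq_nonneg (2*α*x+1)), mul_pos hμ ht]
  have h3 : 0 < 2*α*β*x + β - α := by
    by_contra h; push_neg at h
    have hs : 0 ≤ x * (2*α*x+1)^2 := by nlinarith [key, mul_nonpos_of_nonneg_of_nonpos hμ.le h]
    have hs2 : (2*α*x+1)^2 ≤ 0 := by nlinarith [sq_nonneg (2*α*x+1)]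
    have hu : 2*α*x+1 = 0 := by
      have := le_antisymm hs2 (sq_nonneg (2*α*x+1))
      exact pow_eq_zero_iff (two_ne_zero) |>.mp this
    have hz : μ * α = 0 := by
      linear_combination (2*x*(2*α*x+1) + μ*β)*hu - key
    nlinarith [mul_pos hμ hα]
  constructor
  · have hab : (0:ℝ) < 2*α*β := by
      have := mul_pos hα (hα.trans hαβ); linarith
    have hα' : α ≠ 0 := ne_of_gt hα
    have hβ' : β ≠ 0 := ne_of_gt (hα.trans hαβ)
    rw [show -(1/2) * (1/α - 1/β) = (α - β)/(2*α*β) by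
      rw [eq_div_iff (ne_of_gt hab)]; field_simp; ring]
    rw [div_lt_iff₀ hab]
    linarith
  · exact hx0
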